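/- arXiv:1402.6080 — 6 statements merged into one kernel-verified Lean document; each statement's English description precedes it below -/
import Mathlib

section
/- Let {a_n} be a nonnegative real sequence for which there exists n₀ ∈ ℕ such that for all n ≥ n₀, a_{n+1} ≤ (1 - μ_n) a_n + μ_n η_n, where μ_n ∈ (0,1) for all n, ∑ μ_n = ∞, and η_n ≥ 0 for all n. Then 0 ≤ limsup_{n→∞} a_n ≤ limsup_{n→∞} η_n. -/
open Filter

theorem stmt_1 (a μ η : ℕ → ℝ) (n₀ : ℕ)
    (ha : ∀ n, 0 ≤ a n) (hμ : ∀ n, μ n ∈ Set.Ioo (0 : ℝ) 1) (hη : ∀ n, 0 ≤ η n)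
    (hrec : ∀ n, n₀ ≤ n → a (n + 1) ≤ (1 - μ n) * a n + μ n * η n)
    (hdiv : Tendsto (fun n => ∑ k ∈ Finset.range n, μ k) atTop atTop)
    (hηbdd : BddAbove (Set.range η)) :
    0 ≤ Filter.limsup a atTop ∧ Filter.limsup a atTop ≤ Filter.limsup η atTop := by
  obtain ⟨B, hB⟩ := hηbdd
  have hBη : ∀ n, η n ≤ B := fun n => hB ⟨n, rfl⟩
  set C : ℝ := max ((Finset.range (n₀+1)).sup' (by simp) a) B with hC
  have hCa : ∀ n ≤ n₀, a n ≤ C := fun n hn =>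
    le_max_of_le_left (Finset.le_sup' a (by simp [Nat.lt_succ_iff, hn]))
  have hCη : ∀ n, η n ≤ C := fun n => le_max_of_le_right (hBη n)
  have haC : ∀ n, a n ≤ C := by
    intro n
    induction n with
    | zero => exact hCa 0 (Nat.zero_le _)
    | succ m ih =>
      rcases le_or_gt (m+1) n₀ with h | h
      · exact hCa _ h
      · have hm : n₀ ≤ m := Nat.lt_succ_iff.mp h
        have h1 := (hμ m).1
        have h2 := (hμ m).2
        calc a (m+1) ≤ (1 - μ m) * a m + μ m * η m := hrec m hm
          _ ≤ (1 - μ m) * C + μ m * C := by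
              have e1 : (1 - μ m) * a m ≤ (1 - μ m) * C :=
                mul_le_mul_of_nonneg_left ih (by linarith)
              have e2 : μ m * η m ≤ μ m * C :=
                mul_le_mul_of_nonneg_left (hCη m) (le_of_lt h1)
              linarith
          _ = C := by ring
  have hbdd : IsBoundedUnder (· ≤ ·) atTop a :=
    isBoundedUnder_of ⟨C, haC⟩
  have hcobdd : IsCoboundedUnder (· ≤ ·) atTop a :=
    (isBoundedUnder_of ⟨0, fun n => ha n⟩ : IsBoundedUnder (· ≥ ·) atTop a).isCoboundedUnder_le
  have hbddη : IsBoundedUnder (· ≤ ·) atTop η := isBoundedUnder_of ⟨B, hBη⟩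
  constructor
  · exact le_limsup_of_frequently_le (Frequently.of_forall fun n => ha n) hbdd
  · set L := limsup η atTop with hL
    have key : ∀ ε : ℝ, 0 < ε → limsup a atTop ≤ L + ε + ε := by
      intro ε hε
      have hev : ∀ᶠ n in atTop, η n < L + ε :=
        eventually_lt_of_limsup_lt (lt_add_of_pos_right L hε) hbddη
      obtain ⟨N₁, hN₁⟩ := eventually_atTop.mp hev
      set N := max n₀ N₁ with hN
      set c := L + ε with hc
      have hprodpos : ∀ n, (0:ℝ) < ∏ k ∈ Finset.Ico N n, (1 - μ k) := by
        intro n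
        apply Finset.prod_pos
        intro k _
        have := (hμ k).2
        linarith
      have hkey : ∀ n, N ≤ n →
          a n - c ≤ (∏ k ∈ Finset.Ico N n, (1 - μ k)) * (a N - c) := by
        intro n hn
        induction n with
        | zero =>
          have : N = 0 := Nat.le_zero.mp hn
          simp [this]
        | succ m ih =>
          rcases eq_or_lt_of_le hn with h | h
          · simp [← h]
          · have hNm : N ≤ m := Nat.lt_succ_iff.mp h
            have h1 := (hμ m).1
            have h2 := (hμ m).2
            have hηm : η m < c := hN₁ m (le_trans (le_max_right _ _) hNm)
            have hn₀m : n₀ ≤ m := le_trans (le_max_left _ _) hNm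
            have step : a (m+1) - c ≤ (1 - μ m) * (a m - c) := by
              have := hrec m hn₀m
              nlinarith
            calc a (m+1) - c ≤ (1 - μ m) * (a m - c) := step
              _ ≤ (1 - μ m) * ((∏ k ∈ Finset.Ico N m, (1 - μ k)) * (a N - c)) :=
                  mul_le_mul_of_nonneg_left (ih hNm) (by linarith)
              _ = (∏ k ∈ Finset.Ico N (m+1), (1 - μ k)) * (a N - c) := by
                  rw [Finset.prod_Ico_succ_top hNm]; ring
      set D : ℝ := max (a N - c) 0 with hD
      have hDnonneg : 0 ≤ D := le_max_right _ _
      have hexp : ∀ n, N ≤ n →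
          (∏ k ∈ Finset.Ico N n, (1 - μ k)) ≤
            Real.exp (-((∑ k ∈ Finset.range n, μ k) - ∑ k ∈ Finset.range N, μ k)) := by
        intro n hn
        have : (∏ k ∈ Finset.Ico N n, (1 - μ k)) ≤
            ∏ k ∈ Finset.Ico N n, Real.exp (-(μ k)) := by
          apply Finset.prod_le_prod
          · intro k _; have := (hμ k).2; linarith
          · intro k _
            have := Real.add_one_le_exp (-(μ k))
            linarith
        refine this.trans ?_
        rw [← Real.exp_sum, Real.exp_le_exp, Finset.sum_neg_distrib,
          Finset.sum_Ico_eq_sub _ hn]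
      have htend : Tendsto (fun n => Real.exp (-((∑ k ∈ Finset.range n, μ k)
          - ∑ k ∈ Finset.range N, μ k)) * D) atTop (nhds 0) := by
        have h1 : Tendsto (fun n => (∑ k ∈ Finset.range n, μ k)
            - ∑ k ∈ Finset.range N, μ k) atTop atTop :=
          tendsto_atTop_add_const_right _ _ hdiv
        have h2 : Tendsto (fun n => Real.exp (-((∑ k ∈ Finset.range n, μ k)
            - ∑ k ∈ Finset.range N, μ k))) atTop (nhds 0) :=
          Real.tendsto_exp_atBot.comp (tendsto_neg_atTop_atBot.comp h1)
        simpa using h2.mul_const D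
      have hev2 : ∀ᶠ n in atTop, Real.exp (-((∑ k ∈ Finset.range n, μ k)
          - ∑ k ∈ Finset.range N, μ k)) * D < ε :=
        htend.eventually_lt_const hε
      have hfinal : ∀ᶠ n in atTop, a n ≤ c + ε := by
        filter_upwards [hev2, eventually_ge_atTop N] with n h1 h2
        have e1 : a n - c ≤ (∏ k ∈ Finset.Ico N n, (1 - μ k)) * (a N - c) := hkey n h2
        have e2 : (∏ k ∈ Finset.Ico N n, (1 - μ k)) * (a N - c) ≤
            (∏ k ∈ Finset.Ico N n, (1 - μ k)) * D :=
          mul_le_mul_of_nonneg_left (le_max_left _ _) (hprodpos n).le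
        have e3 : (∏ k ∈ Finset.Ico N n, (1 - μ k)) * D ≤
            Real.exp (-((∑ k ∈ Finset.range n, μ k) - ∑ k ∈ Finset.range N, μ k)) * D :=
          mul_le_mul_of_nonneg_right (hexp n h2) hDnonneg
        linarith
      calc limsup a atTop ≤ c + ε := limsup_le_of_le hcobdd hfinal
        _ = L + ε + ε := by rw [hc]
    refine le_of_forall_pos_le_add fun ε hε => ?_
    have := key (ε/2) (by linarith)
    linarith
end

section
/- Under the hypotheses of the Karahan–Özdemir iteration for a contraction T with constant δ ∈ (0,1) and fixed point x⋆, one has for all n the one-step contraction estimate ‖p_{n+1} - x⋆‖ ≤ [1 - α_n¹(1-δ)] ‖p_n - x⋆‖. -/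
lemma comb_norm {B : Type*} [NormedAddCommGroup B] [NormedSpace ℝ B]
    (a : ℝ) (ha : 0 ≤ a) (ha1 : a ≤ 1) (x y z : B) :
    ‖(1 - a) • x + a • y - z‖ ≤ (1 - a) * ‖x - z‖ + a * ‖y - z‖ := by
  have h : (1 - a) • x + a • y - z = (1 - a) • (x - z) + a • (y - z) := by module
  rw [h]
  calc ‖(1 - a) • (x - z) + a • (y - z)‖ ≤ ‖(1 - a) • (x - z)‖ + ‖a • (y - z)‖ :=
        norm_add_le _ _
    _ = (1 - a) * ‖x - z‖ + a * ‖y - z‖ := by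
        rw [norm_smul, norm_smul, Real.norm_eq_abs, Real.norm_eq_abs,
          abs_of_nonneg (by linarith), abs_of_nonneg ha]

theorem stmt_3 {B : Type*} [NormedAddCommGroup B] [NormedSpace ℝ B] [CompleteSpace B]
    (S : Set B) (hS : S.Nonempty) (hScl : IsClosed S) (hSco : Convex ℝ S)
    (T : B → B) (hTS : ∀ x ∈ S, T x ∈ S)
    (δ : ℝ) (hδ : δ ∈ Set.Ioo (0 : ℝ) 1)
    (hT : ∀ x ∈ S, ∀ y ∈ S, ‖T x - T y‖ ≤ δ * ‖x - y‖)
    (xs : B) (hxs : xs ∈ S) (hfix : T xs = xs)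
    (α1 α2 α3 : ℕ → ℝ)
    (hα1 : ∀ n, α1 n ∈ Set.Icc (0 : ℝ) 1) (hα2 : ∀ n, α2 n ∈ Set.Icc (0 : ℝ) 1)
    (hα3 : ∀ n, α3 n ∈ Set.Icc (0 : ℝ) 1)
    (p q r : ℕ → B) (hp0 : p 0 ∈ S)
    (hp : ∀ n, p (n + 1) = (1 - α1 n) • T (p n) + α1 n • T (q n))
    (hq : ∀ n, q n = (1 - α2 n) • T (p n) + α2 n • T (r n))
    (hr : ∀ n, r n = (1 - α3 n) • p n + α3 n • T (p n)) :
    ∀ n, ‖p (n + 1) - xs‖ ≤ (1 - α1 n * (1 - δ)) * ‖p n - xs‖ := by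
  obtain ⟨hδ0, hδ1⟩ := hδ
  have hpS : ∀ n, p n ∈ S := by
    intro n
    induction n with
    | zero => exact hp0
    | succ n ih =>
      have hrS : r n ∈ S := by
        rw [hr n]
        exact hSco ih (hTS _ ih) (by linarith [(hα3 n).2]) (hα3 n).1 (by ring)
      have hqS : q n ∈ S := by
        rw [hq n]
        exact hSco (hTS _ ih) (hTS _ hrS) (by linarith [(hα2 n).2]) (hα2 n).1 (by ring)
      rw [hp n]
      exact hSco (hTS _ ih) (hTS _ hqS) (by linarith [(hα1 n).2]) (hα1 n).1 (by ring)
  intro n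
  obtain ⟨h10, h11⟩ := hα1 n
  obtain ⟨h20, h21⟩ := hα2 n
  obtain ⟨h30, h31⟩ := hα3 n
  have hpn := hpS n
  have hrS : r n ∈ S := by
    rw [hr n]; exact hSco hpn (hTS _ hpn) (by linarith) h30 (by ring)
  have hqS : q n ∈ S := by
    rw [hq n]; exact hSco (hTS _ hpn) (hTS _ hrS) (by linarith) h20 (by ring)
  have hnn : (0:ℝ) ≤ ‖p n - xs‖ := norm_nonneg _
  have hTp : ‖T (p n) - xs‖ ≤ δ * ‖p n - xs‖ := by
    have := hT _ hpn _ hxs; rwa [hfix] at this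
  have hrest : ‖r n - xs‖ ≤ ‖p n - xs‖ := by
    rw [hr n]
    calc ‖(1 - α3 n) • p n + α3 n • T (p n) - xs‖
        ≤ (1 - α3 n) * ‖p n - xs‖ + α3 n * ‖T (p n) - xs‖ := comb_norm _ h30 h31 _ _ _
      _ ≤ (1 - α3 n) * ‖p n - xs‖ + α3 n * (δ * ‖p n - xs‖) :=
          add_le_add_right (mul_le_mul_of_nonneg_left hTp h30) _
      _ ≤ ‖p n - xs‖ := by
          nlinarith [mul_nonneg (mul_nonneg h30 (by linarith : (0:ℝ) ≤ 1 - δ)) hnn]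
  have hTr : ‖T (r n) - xs‖ ≤ δ * ‖r n - xs‖ := by
    have := hT _ hrS _ hxs; rwa [hfix] at this
  have hqest : ‖q n - xs‖ ≤ ‖p n - xs‖ := by
    rw [hq n]
    calc ‖(1 - α2 n) • T (p n) + α2 n • T (r n) - xs‖
        ≤ (1 - α2 n) * ‖T (p n) - xs‖ + α2 n * ‖T (r n) - xs‖ := comb_norm _ h20 h21 _ _ _
      _ ≤ (1 - α2 n) * (δ * ‖p n - xs‖) + α2 n * (δ * ‖r n - xs‖) :=
          add_le_add (mul_le_mul_of_nonneg_left hTp (by linarith))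
            (mul_le_mul_of_nonneg_left hTr h20)
      _ ≤ ‖p n - xs‖ := by
          nlinarith [mul_nonneg (mul_nonneg h20 hδ0.le) (sub_nonneg.2 hrest),
            mul_nonneg (by linarith : (0:ℝ) ≤ 1 - δ) hnn]
  have hTq : ‖T (q n) - xs‖ ≤ δ * ‖q n - xs‖ := by
    have := hT _ hqS _ hxs; rwa [hfix] at this
  rw [hp n]
  calc ‖(1 - α1 n) • T (p n) + α1 n • T (q n) - xs‖
      ≤ (1 - α1 n) * ‖T (p n) - xs‖ + α1 n * ‖T (q n) - xs‖ := comb_norm _ h10 h11 _ _ _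
    _ ≤ (1 - α1 n) * (δ * ‖p n - xs‖) + α1 n * (δ * ‖p n - xs‖) := by
        refine add_le_add (mul_le_mul_of_nonneg_left hTp (by linarith))
          (mul_le_mul_of_nonneg_left ?_ h10)
        exact hTq.trans (mul_le_mul_of_nonneg_left hqest hδ0.le)
    _ ≤ (1 - α1 n * (1 - δ)) * ‖p n - xs‖ := by
        nlinarith [mul_nonneg (mul_nonneg (by linarith : (0:ℝ) ≤ 1 - α1 n)
          (by linarith : (0:ℝ) ≤ 1 - δ)) hnn]
end

section
/- Let T : S → S be a contraction with constant δ ∈ (0,1) on a nonempty closed convex subset S of a Banach space B, with fixed point x⋆. If sequences α_n¹, α_n², α_n³ ∈ [0,1] satisfy ∑_{k} α_k¹ = ∞, then the Karahan–Özdemir iteration sequence {p_n} converges to x⋆, and moreover ‖p_{n+1} - x⋆‖ ≤ ‖p₀ - x⋆‖ · exp(-(1-δ) ∑_{k=0}^{n} α_k¹). -/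
open Filter

private lemma combo_sub {B : Type*} [NormedAddCommGroup B] [NormedSpace ℝ B]
    (a : ℝ) (x y z : B) :
    (1 - a) • x + a • y - z = (1 - a) • (x - z) + a • (y - z) := by
  simp [smul_sub, sub_smul]; abel

private lemma combo_norm {B : Type*} [NormedAddCommGroup B] [NormedSpace ℝ B]
    {a : ℝ} (ha : a ∈ Set.Icc (0:ℝ) 1) (x y z : B) :
    ‖(1 - a) • x + a • y - z‖ ≤ (1 - a) * ‖x - z‖ + a * ‖y - z‖ := by
  rw [combo_sub]
  refine le_trans (norm_add_le _ _) ?_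
  rw [norm_smul, norm_smul, Real.norm_eq_abs, Real.norm_eq_abs,
    abs_of_nonneg (by linarith [ha.2]), abs_of_nonneg ha.1]

theorem stmt_4 {B : Type*} [NormedAddCommGroup B] [NormedSpace ℝ B] [CompleteSpace B]
    (S : Set B) (hS : S.Nonempty) (hScl : IsClosed S) (hSco : Convex ℝ S)
    (T : B → B) (hTS : ∀ x ∈ S, T x ∈ S)
    (δ : ℝ) (hδ : δ ∈ Set.Ioo (0 : ℝ) 1)
    (hT : ∀ x ∈ S, ∀ y ∈ S, ‖T x - T y‖ ≤ δ * ‖x - y‖)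
    (xs : B) (hxs : xs ∈ S) (hfix : T xs = xs)
    (α1 α2 α3 : ℕ → ℝ)
    (hα1 : ∀ n, α1 n ∈ Set.Icc (0 : ℝ) 1) (hα2 : ∀ n, α2 n ∈ Set.Icc (0 : ℝ) 1)
    (hα3 : ∀ n, α3 n ∈ Set.Icc (0 : ℝ) 1)
    (hdiv : Tendsto (fun n => ∑ k ∈ Finset.range n, α1 k) atTop atTop)
    (p q r : ℕ → B) (hp0 : p 0 ∈ S)
    (hp : ∀ n, p (n + 1) = (1 - α1 n) • T (p n) + α1 n • T (q n))
    (hq : ∀ n, q n = (1 - α2 n) • T (p n) + α2 n • T (r n))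
    (hr : ∀ n, r n = (1 - α3 n) • p n + α3 n • T (p n)) :
    Tendsto p atTop (nhds xs) ∧
      ∀ n, ‖p (n + 1) - xs‖ ≤
        ‖p 0 - xs‖ * Real.exp (-(1 - δ) * ∑ k ∈ Finset.range (n + 1), α1 k) := by
  obtain ⟨hδ0, hδ1⟩ := hδ
  -- memberships
  have hrS : ∀ n, p n ∈ S → r n ∈ S := fun n hpn => by
    rw [hr n]
    exact hSco hpn (hTS _ hpn) (by linarith [(hα3 n).2]) (hα3 n).1 (by ring)
  have hqS : ∀ n, p n ∈ S → q n ∈ S := fun n hpn => by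
    rw [hq n]
    exact hSco (hTS _ hpn) (hTS _ (hrS n hpn)) (by linarith [(hα2 n).2]) (hα2 n).1 (by ring)
  have hpS : ∀ n, p n ∈ S := by
    intro n
    induction n with
    | zero => exact hp0
    | succ n ih =>
      rw [hp n]
      exact hSco (hTS _ ih) (hTS _ (hqS n ih)) (by linarith [(hα1 n).2]) (hα1 n).1 (by ring)
  have hnn : ∀ n, (0:ℝ) ≤ ‖p n - xs‖ := fun n => norm_nonneg _
  have hTnorm : ∀ x ∈ S, ‖T x - xs‖ ≤ δ * ‖x - xs‖ := by
    intro x hx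
    have := hT x hx xs hxs
    rwa [hfix] at this
  -- key inequality
  have hkey : ∀ n, ‖p (n + 1) - xs‖ ≤ (1 - (1 - δ) * α1 n) * ‖p n - xs‖ := by
    intro n
    have hrb : ‖r n - xs‖ ≤ ‖p n - xs‖ := by
      rw [hr n]
      refine le_trans (combo_norm (hα3 n) _ _ _) ?_
      have h1 := hTnorm _ (hpS n)
      have h3 : α3 n * ‖T (p n) - xs‖ ≤ α3 n * (δ * ‖p n - xs‖) :=
        mul_le_mul_of_nonneg_left h1 (hα3 n).1
      nlinarith [(hα3 n).1, (hα3 n).2, hnn n, mul_nonneg (hα3 n).1 (hnn n)]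
    have hqb : ‖q n - xs‖ ≤ δ * ‖p n - xs‖ := by
      rw [hq n]
      refine le_trans (combo_norm (hα2 n) _ _ _) ?_
      have h1 := hTnorm _ (hpS n)
      have h2 := hTnorm _ (hrS n (hpS n))
      calc (1 - α2 n) * ‖T (p n) - xs‖ + α2 n * ‖T (r n) - xs‖
          ≤ (1 - α2 n) * (δ * ‖p n - xs‖) + α2 n * (δ * ‖p n - xs‖) := by
            refine add_le_add (mul_le_mul_of_nonneg_left h1 (by linarith [(hα2 n).2])) ?_
            refine mul_le_mul_of_nonneg_left (h2.trans ?_) (hα2 n).1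
            exact mul_le_mul_of_nonneg_left hrb hδ0.le
        _ = δ * ‖p n - xs‖ := by ring
    rw [hp n]
    refine le_trans (combo_norm (hα1 n) _ _ _) ?_
    have h1 := hTnorm _ (hpS n)
    have h2 := hTnorm _ (hqS n (hpS n))
    calc (1 - α1 n) * ‖T (p n) - xs‖ + α1 n * ‖T (q n) - xs‖
        ≤ (1 - α1 n) * (δ * ‖p n - xs‖) + α1 n * (δ * (δ * ‖p n - xs‖)) := by
          refine add_le_add (mul_le_mul_of_nonneg_left h1 (by linarith [(hα1 n).2])) ?_
          refine mul_le_mul_of_nonneg_left (h2.trans ?_) (hα1 n).1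
          exact mul_le_mul_of_nonneg_left hqb hδ0.le
      _ ≤ (1 - (1 - δ) * α1 n) * ‖p n - xs‖ := by
          nlinarith [mul_nonneg (mul_nonneg (by linarith : (0:ℝ) ≤ 1 - δ) (hnn n))
            (by nlinarith [(hα1 n).2, hδ1, (hα1 n).1] : (0:ℝ) ≤ 1 - α1 n * (1 - δ))]
  have hfac : ∀ n, (0:ℝ) ≤ 1 - (1 - δ) * α1 n := by
    intro n; nlinarith [(hα1 n).1, (hα1 n).2]
  have hfacexp : ∀ n, 1 - (1 - δ) * α1 n ≤ Real.exp (-(1 - δ) * α1 n) := by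
    intro n
    have := Real.add_one_le_exp (-(1 - δ) * α1 n)
    linarith
  -- the exponential bound
  have hbound : ∀ n, ‖p (n + 1) - xs‖ ≤
      ‖p 0 - xs‖ * Real.exp (-(1 - δ) * ∑ k ∈ Finset.range (n + 1), α1 k) := by
    intro n
    induction n with
    | zero =>
      rw [show (0:ℕ)+1 = 1 from rfl, Finset.sum_range_one]
      calc ‖p 1 - xs‖ ≤ (1 - (1 - δ) * α1 0) * ‖p 0 - xs‖ := hkey 0
        _ ≤ Real.exp (-(1 - δ) * α1 0) * ‖p 0 - xs‖ :=
            mul_le_mul_of_nonneg_right (hfacexp 0) (hnn 0)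
        _ = ‖p 0 - xs‖ * Real.exp (-(1 - δ) * α1 0) := mul_comm _ _
    | succ n ih =>
      calc ‖p (n + 2) - xs‖ ≤ (1 - (1 - δ) * α1 (n + 1)) * ‖p (n + 1) - xs‖ := hkey (n + 1)
        _ ≤ Real.exp (-(1 - δ) * α1 (n + 1)) *
              (‖p 0 - xs‖ * Real.exp (-(1 - δ) * ∑ k ∈ Finset.range (n + 1), α1 k)) := by
            apply mul_le_mul (hfacexp (n + 1)) ih (hnn (n + 1)) (Real.exp_nonneg _)
        _ = ‖p 0 - xs‖ * Real.exp (-(1 - δ) * ∑ k ∈ Finset.range (n + 2), α1 k) := by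
            rw [show ∑ k ∈ Finset.range (n + 2), α1 k
                = (∑ k ∈ Finset.range (n + 1), α1 k) + α1 (n + 1) from
                Finset.sum_range_succ _ _, mul_add, Real.exp_add]
            ring
  refine ⟨?_, hbound⟩
  -- convergence
  rw [tendsto_iff_norm_sub_tendsto_zero]
  have hex : Tendsto (fun n => ‖p 0 - xs‖ *
      Real.exp (-(1 - δ) * ∑ k ∈ Finset.range n, α1 k)) atTop (nhds 0) := by
    have h1 : Tendsto (fun n => -(1 - δ) * ∑ k ∈ Finset.range n, α1 k) atTop atBot := by
      apply Tendsto.const_mul_atTop_of_neg (by linarith : -(1 - δ) < 0) hdiv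
    have := (Real.tendsto_exp_atBot.comp h1).const_mul ‖p 0 - xs‖
    simpa using this
  apply squeeze_zero' (Eventually.of_forall fun n => norm_nonneg _) ?_ hex
  filter_upwards [eventually_ge_atTop 1] with n hn
  obtain ⟨m, rfl⟩ := Nat.exists_eq_add_of_le hn
  simpa [add_comm] using hbound m
end

section
/- Let δ ∈ (0,1), α₁, α₂, α₃ ∈ (0,1) and let a_n = C₁ δ^{n+1} [1-α₁(1-δ)]^{n+1} [1-α₂α₃(1-δ)]^{n+1} and b_n = C₂ δ^{n+1} [1 - α₁(1 - δ(1 - α₂α₃(1-δ)))]^{n+1} with C₁, C₂ > 0. Then a_n / b_n → 0 as n → ∞. -/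
open Filter

theorem stmt_10 (δ α1 α2 α3 C1 C2 : ℝ) (hδ : δ ∈ Set.Ioo (0 : ℝ) 1)
    (h1 : α1 ∈ Set.Ioo (0 : ℝ) 1) (h2 : α2 ∈ Set.Ioo (0 : ℝ) 1)
    (h3 : α3 ∈ Set.Ioo (0 : ℝ) 1) (hC1 : 0 < C1) (hC2 : 0 < C2) :
    Tendsto
      (fun n : ℕ =>
        (C1 * δ ^ (n + 1) * (1 - α1 * (1 - δ)) ^ (n + 1) *
            (1 - α2 * α3 * (1 - δ)) ^ (n + 1)) /
          (C2 * δ ^ (n + 1) *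
            (1 - α1 * (1 - δ * (1 - α2 * α3 * (1 - δ)))) ^ (n + 1)))
      atTop (nhds 0) := by
  obtain ⟨hδ0, hδ1⟩ := hδ
  obtain ⟨h10, h11⟩ := h1
  obtain ⟨h20, h21⟩ := h2
  obtain ⟨h30, h31⟩ := h3
  set A := 1 - α1 * (1 - δ) with hA
  set B := 1 - α2 * α3 * (1 - δ) with hB
  set D := 1 - α1 * (1 - δ * B) with hD
  have h23 : 0 < α2 * α3 := by positivity
  have h231 : α2 * α3 < 1 := by nlinarith
  have hq : 0 < α2 * α3 * (1 - δ) := mul_pos h23 (by linarith)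
  have hBpos : 0 < B := by
    have : α2 * α3 * (1 - δ) < 1 := by nlinarith
    linarith
  have hB1 : B < 1 := by simp only [hB]; linarith
  have hApos : 0 < A := by nlinarith
  have hDpos : 0 < D := by nlinarith
  have hkey : A * B < D := by nlinarith
  have hr0 : 0 ≤ A * B / D := by positivity
  have hr1 : A * B / D < 1 := (div_lt_one hDpos).2 hkey
  have heq : (fun n : ℕ =>
        (C1 * δ ^ (n + 1) * A ^ (n + 1) * B ^ (n + 1)) /
          (C2 * δ ^ (n + 1) * D ^ (n + 1)))
      = fun n : ℕ => (C1 / C2) * (A * B / D) ^ (n + 1) := by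
    funext n
    rw [div_pow, mul_pow]
    field_simp
  rw [heq]
  have h0 : Tendsto (fun n : ℕ => (A * B / D) ^ n) atTop (nhds 0) :=
    tendsto_pow_atTop_nhds_zero_of_lt_one hr0 hr1
  have h1 : Tendsto (fun n : ℕ => (A * B / D) ^ (n + 1)) atTop (nhds 0) :=
    h0.comp (tendsto_add_atTop_nat 1)
  simpa using h1.const_mul (C1 / C2)
end

section
/- Let T be a contraction with constant δ ∈ (0,1) and fixed point x⋆, and suppose the sequences satisfy α₁ ≤ α_n¹ ≤ 1, α₂ ≤ α_n² ≤ 1, α₃ ≤ α_n³ ≤ 1 for some α₁, α₂, α₃ > 0. If u₀ = p₀ ∈ S, then the CR iteration error satisfies ‖u_{n+1} - x⋆‖ ≤ ‖u₀ - x⋆‖ δ^{n+1} [1-α₁(1-δ)]^{n+1} [1-α₂α₃(1-δ)]^{n+1} for all n. -/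
theorem stmt_11 {B : Type*} [NormedAddCommGroup B] [NormedSpace ℝ B] [CompleteSpace B]
    (S : Set B) (hS : S.Nonempty) (hScl : IsClosed S) (hSco : Convex ℝ S)
    (T : B → B) (hTS : ∀ x ∈ S, T x ∈ S)
    (δ : ℝ) (hδ : δ ∈ Set.Ioo (0 : ℝ) 1)
    (hT : ∀ x ∈ S, ∀ y ∈ S, ‖T x - T y‖ ≤ δ * ‖x - y‖)
    (xs : B) (hxs : xs ∈ S) (hfix : T xs = xs)
    (α1 α2 α3 : ℕ → ℝ) (a1 a2 a3 : ℝ)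
    (ha1 : 0 < a1) (ha2 : 0 < a2) (ha3 : 0 < a3)
    (hα1 : ∀ n, a1 ≤ α1 n ∧ α1 n ≤ 1) (hα2 : ∀ n, a2 ≤ α2 n ∧ α2 n ≤ 1)
    (hα3 : ∀ n, a3 ≤ α3 n ∧ α3 n ≤ 1)
    (u v y : ℕ → B) (hu0 : u 0 ∈ S)
    (hu : ∀ n, u (n + 1) = (1 - α1 n) • v n + α1 n • T (v n))
    (hv : ∀ n, v n = (1 - α2 n) • T (u n) + α2 n • T (y n))
    (hy : ∀ n, y n = (1 - α3 n) • u n + α3 n • T (u n)) :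
    ∀ n, ‖u (n + 1) - xs‖ ≤
      ‖u 0 - xs‖ * δ ^ (n + 1) * (1 - a1 * (1 - δ)) ^ (n + 1) *
        (1 - a2 * a3 * (1 - δ)) ^ (n + 1) := by
  obtain ⟨hδ0, hδ1⟩ := hδ
  have h1δ : (0 : ℝ) < 1 - δ := by linarith
  have hUS : ∀ n, u n ∈ S := by
    intro n
    induction n with
    | zero => exact hu0
    | succ k ih =>
      have hyk : y k ∈ S := by
        rw [hy k]
        exact hSco ih (hTS _ ih) (by linarith [(hα3 k).2])
          (le_trans ha3.le (hα3 k).1) (by ring)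
      have hvk : v k ∈ S := by
        rw [hv k]
        exact hSco (hTS _ ih) (hTS _ hyk) (by linarith [(hα2 k).2])
          (le_trans ha2.le (hα2 k).1) (by ring)
      rw [hu k]
      exact hSco hvk (hTS _ hvk) (by linarith [(hα1 k).2])
        (le_trans ha1.le (hα1 k).1) (by ring)
  set C := δ * (1 - a1 * (1 - δ)) * (1 - a2 * a3 * (1 - δ)) with hC
  have ha1' : a1 ≤ 1 := le_trans (hα1 0).1 (hα1 0).2
  have ha2' : a2 ≤ 1 := le_trans (hα2 0).1 (hα2 0).2
  have ha3' : a3 ≤ 1 := le_trans (hα3 0).1 (hα3 0).2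
  have hF1 : 0 < 1 - a1 * (1 - δ) := by nlinarith
  have hF2 : 0 < 1 - a2 * a3 * (1 - δ) := by
    have h23 : a2 * a3 ≤ 1 := mul_le_one₀ ha2' ha3.le ha3'
    nlinarith [mul_le_mul_of_nonneg_right h23 h1δ.le]
  have hCpos : 0 < C := by positivity
  have key : ∀ n, ‖u (n + 1) - xs‖ ≤ C * ‖u n - xs‖ := by
    intro n
    have hun := hUS n
    obtain ⟨h1l, h1u⟩ := hα1 n
    obtain ⟨h2l, h2u⟩ := hα2 n
    obtain ⟨h3l, h3u⟩ := hα3 n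
    have h1p : (0:ℝ) ≤ α1 n := le_trans ha1.le h1l
    have h2p : (0:ℝ) ≤ α2 n := le_trans ha2.le h2l
    have h3p : (0:ℝ) ≤ α3 n := le_trans ha3.le h3l
    have hyn : y n ∈ S := by
      rw [hy n]; exact hSco hun (hTS _ hun) (by linarith) h3p (by ring)
    have hvn : v n ∈ S := by
      rw [hv n]; exact hSco (hTS _ hun) (hTS _ hyn) (by linarith) h2p (by ring)
    have hTu : ‖T (u n) - xs‖ ≤ δ * ‖u n - xs‖ := by
      calc ‖T (u n) - xs‖ = ‖T (u n) - T xs‖ := by rw [hfix]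
        _ ≤ δ * ‖u n - xs‖ := hT _ hun _ hxs
    have hTy : ‖T (y n) - xs‖ ≤ δ * ‖y n - xs‖ := by
      calc ‖T (y n) - xs‖ = ‖T (y n) - T xs‖ := by rw [hfix]
        _ ≤ δ * ‖y n - xs‖ := hT _ hyn _ hxs
    have hTv : ‖T (v n) - xs‖ ≤ δ * ‖v n - xs‖ := by
      calc ‖T (v n) - xs‖ = ‖T (v n) - T xs‖ := by rw [hfix]
        _ ≤ δ * ‖v n - xs‖ := hT _ hvn _ hxs
    have hYe : ‖y n - xs‖ ≤ (1 - α3 n * (1 - δ)) * ‖u n - xs‖ := by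
      have heq : y n - xs = (1 - α3 n) • (u n - xs) + α3 n • (T (u n) - xs) := by
        rw [hy n]; module
      calc ‖y n - xs‖ ≤ ‖(1 - α3 n) • (u n - xs)‖ + ‖α3 n • (T (u n) - xs)‖ := by
            rw [heq]; exact norm_add_le _ _
        _ = (1 - α3 n) * ‖u n - xs‖ + α3 n * ‖T (u n) - xs‖ := by
            rw [norm_smul, norm_smul, Real.norm_of_nonneg (by linarith),
              Real.norm_of_nonneg h3p]
        _ ≤ (1 - α3 n) * ‖u n - xs‖ + α3 n * (δ * ‖u n - xs‖) := by
            have := mul_le_mul_of_nonneg_left hTu h3p; linarith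
        _ = (1 - α3 n * (1 - δ)) * ‖u n - xs‖ := by ring
    have hVe : ‖v n - xs‖ ≤ δ * (1 - α2 n * α3 n * (1 - δ)) * ‖u n - xs‖ := by
      have heq : v n - xs = (1 - α2 n) • (T (u n) - xs) + α2 n • (T (y n) - xs) := by
        rw [hv n]; module
      calc ‖v n - xs‖ ≤ ‖(1 - α2 n) • (T (u n) - xs)‖ + ‖α2 n • (T (y n) - xs)‖ := by
            rw [heq]; exact norm_add_le _ _
        _ = (1 - α2 n) * ‖T (u n) - xs‖ + α2 n * ‖T (y n) - xs‖ := by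
            rw [norm_smul, norm_smul, Real.norm_of_nonneg (by linarith),
              Real.norm_of_nonneg h2p]
        _ ≤ (1 - α2 n) * (δ * ‖u n - xs‖) + α2 n * (δ * ((1 - α3 n * (1 - δ)) * ‖u n - xs‖)) := by
            have hTy' : ‖T (y n) - xs‖ ≤ δ * ((1 - α3 n * (1 - δ)) * ‖u n - xs‖) :=
              le_trans hTy (by nlinarith)
            have h1 := mul_le_mul_of_nonneg_left hTu (by linarith : (0:ℝ) ≤ 1 - α2 n)
            have h2 := mul_le_mul_of_nonneg_left hTy' h2p
            linarith
        _ = δ * (1 - α2 n * α3 n * (1 - δ)) * ‖u n - xs‖ := by ring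
    have hUe : ‖u (n + 1) - xs‖ ≤ (1 - α1 n * (1 - δ)) * ‖v n - xs‖ := by
      have heq : u (n + 1) - xs = (1 - α1 n) • (v n - xs) + α1 n • (T (v n) - xs) := by
        rw [hu n]; module
      calc ‖u (n + 1) - xs‖ ≤ ‖(1 - α1 n) • (v n - xs)‖ + ‖α1 n • (T (v n) - xs)‖ := by
            rw [heq]; exact norm_add_le _ _
        _ = (1 - α1 n) * ‖v n - xs‖ + α1 n * ‖T (v n) - xs‖ := by
            rw [norm_smul, norm_smul, Real.norm_of_nonneg (by linarith),
              Real.norm_of_nonneg h1p]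
        _ ≤ (1 - α1 n) * ‖v n - xs‖ + α1 n * (δ * ‖v n - xs‖) := by
            have := mul_le_mul_of_nonneg_left hTv h1p; linarith
        _ = (1 - α1 n * (1 - δ)) * ‖v n - xs‖ := by ring
    have hA1 : (0:ℝ) ≤ 1 - α1 n * (1 - δ) := by nlinarith
    have hB1 : (0:ℝ) ≤ 1 - α2 n * α3 n * (1 - δ) := by
      have h23 : α2 n * α3 n ≤ 1 := mul_le_one₀ h2u h3p h3u
      nlinarith [mul_le_mul_of_nonneg_right h23 h1δ.le]
    have hA : 1 - α1 n * (1 - δ) ≤ 1 - a1 * (1 - δ) := by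
      have := mul_le_mul_of_nonneg_right h1l h1δ.le; linarith
    have hB : 1 - α2 n * α3 n * (1 - δ) ≤ 1 - a2 * a3 * (1 - δ) := by
      have h23 : a2 * a3 ≤ α2 n * α3 n := mul_le_mul h2l h3l ha3.le h2p
      have := mul_le_mul_of_nonneg_right h23 h1δ.le; linarith
    have hN : (0:ℝ) ≤ ‖u n - xs‖ := norm_nonneg _
    calc ‖u (n + 1) - xs‖ ≤ (1 - α1 n * (1 - δ)) * ‖v n - xs‖ := hUe
      _ ≤ (1 - α1 n * (1 - δ)) * (δ * (1 - α2 n * α3 n * (1 - δ)) * ‖u n - xs‖) :=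
          mul_le_mul_of_nonneg_left hVe hA1
      _ = δ * (1 - α1 n * (1 - δ)) * (1 - α2 n * α3 n * (1 - δ)) * ‖u n - xs‖ := by ring
      _ ≤ C * ‖u n - xs‖ := by
          rw [hC]
          have hda : δ * (1 - α1 n * (1 - δ)) ≤ δ * (1 - a1 * (1 - δ)) :=
            mul_le_mul_of_nonneg_left hA hδ0.le
          have : δ * (1 - α1 n * (1 - δ)) * (1 - α2 n * α3 n * (1 - δ)) ≤
              δ * (1 - a1 * (1 - δ)) * (1 - a2 * a3 * (1 - δ)) :=
            mul_le_mul hda hB hB1 (by positivity)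
          exact mul_le_mul_of_nonneg_right this hN
  intro n
  induction n with
  | zero =>
    calc ‖u 1 - xs‖ ≤ C * ‖u 0 - xs‖ := key 0
      _ = ‖u 0 - xs‖ * δ ^ 1 * (1 - a1 * (1 - δ)) ^ 1 * (1 - a2 * a3 * (1 - δ)) ^ 1 := by
          rw [hC]; ring
  | succ k ih =>
    calc ‖u (k + 2) - xs‖ ≤ C * ‖u (k + 1) - xs‖ := key (k + 1)
      _ ≤ C * (‖u 0 - xs‖ * δ ^ (k + 1) * (1 - a1 * (1 - δ)) ^ (k + 1) *
            (1 - a2 * a3 * (1 - δ)) ^ (k + 1)) := mul_le_mul_of_nonneg_left ih hCpos.le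
      _ = ‖u 0 - xs‖ * δ ^ (k + 1 + 1) * (1 - a1 * (1 - δ)) ^ (k + 1 + 1) *
            (1 - a2 * a3 * (1 - δ)) ^ (k + 1 + 1) := by rw [hC]; ring
end

section
/- Let T : S → S be a contraction with constant δ ∈ (0,1) and fixed point p, and T̃ an approximate operator of T with ‖Tx - T̃x‖ ≤ ε for all x ∈ S, with fixed point p̃. Let {p_n} and {p̃_n} be the Karahan–Özdemir iterations for T and T̃ with scalar sequences α_n^i ∈ [0,1] satisfying 1/2 ≤ α_n¹ for all n and ∑ α_n¹ = ∞. Then, assuming p̃_n → p̃, one has ‖p - p̃‖ ≤ 5ε / (1 - δ). -/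
open Filter

theorem stmt_13 {B : Type*} [NormedAddCommGroup B] [NormedSpace ℝ B] [CompleteSpace B]
    (S : Set B) (hS : S.Nonempty) (hScl : IsClosed S) (hSco : Convex ℝ S)
    (T T' : B → B) (hTS : ∀ x ∈ S, T x ∈ S) (hT'S : ∀ x ∈ S, T' x ∈ S)
    (δ : ℝ) (hδ : δ ∈ Set.Ioo (0 : ℝ) 1)
    (hT : ∀ x ∈ S, ∀ y ∈ S, ‖T x - T y‖ ≤ δ * ‖x - y‖)
    (ε : ℝ) (hε : 0 < ε) (happrox : ∀ x ∈ S, ‖T x - T' x‖ ≤ ε)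
    (pfix p'fix : B) (hpfixS : pfix ∈ S) (hp'fixS : p'fix ∈ S)
    (hfix : T pfix = pfix) (hfix' : T' p'fix = p'fix)
    (α1 α2 α3 : ℕ → ℝ)
    (hα1 : ∀ n, α1 n ∈ Set.Icc (0 : ℝ) 1) (hα2 : ∀ n, α2 n ∈ Set.Icc (0 : ℝ) 1)
    (hα3 : ∀ n, α3 n ∈ Set.Icc (0 : ℝ) 1)
    (hhalf : ∀ n, (1 : ℝ) / 2 ≤ α1 n)
    (hdiv : Tendsto (fun n => ∑ k ∈ Finset.range n, α1 k) atTop atTop)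
    (p q r p' q' r' : ℕ → B) (hp0 : p 0 ∈ S) (hp'0 : p' 0 ∈ S)
    (hp : ∀ n, p (n + 1) = (1 - α1 n) • T (p n) + α1 n • T (q n))
    (hq : ∀ n, q n = (1 - α2 n) • T (p n) + α2 n • T (r n))
    (hr : ∀ n, r n = (1 - α3 n) • p n + α3 n • T (p n))
    (hp' : ∀ n, p' (n + 1) = (1 - α1 n) • T' (p' n) + α1 n • T' (q' n))
    (hq' : ∀ n, q' n = (1 - α2 n) • T' (p' n) + α2 n • T' (r' n))
    (hr' : ∀ n, r' n = (1 - α3 n) • p' n + α3 n • T' (p' n))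
    (hconv : Tendsto p' atTop (nhds p'fix)) :
    ‖pfix - p'fix‖ ≤ 5 * ε / (1 - δ) := by
  obtain ⟨hδ0, hδ1⟩ := hδ
  have h1δ : 0 < 1 - δ := by linarith
  have key : ‖pfix - p'fix‖ ≤ δ * ‖pfix - p'fix‖ + ε := by
    calc ‖pfix - p'fix‖ = ‖(T pfix - T p'fix) + (T p'fix - T' p'fix)‖ := by
          rw [hfix, hfix']; congr 1; abel
      _ ≤ ‖T pfix - T p'fix‖ + ‖T p'fix - T' p'fix‖ := norm_add_le _ _
      _ ≤ δ * ‖pfix - p'fix‖ + ε := by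
          gcongr
          · exact hT pfix hpfixS p'fix hp'fixS
          · exact happrox p'fix hp'fixS
  have h2 : (1 - δ) * ‖pfix - p'fix‖ ≤ ε := by nlinarith [norm_nonneg (pfix - p'fix)]
  rw [le_div_iff₀ h1δ]
  nlinarith
end
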